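/- Let n ≥ 1, q > −1 with p := 2q+3 > 1, β ≤ 0 and R₀ ≥ 0. Let (u,v) be a classical radial solution of −Δu = |u|^{2q+2}u + β|v|^{q+2}|u|^q u, −Δv = |v|^{2q+2}v + β|u|^{q+2}|v|^q v in ℝⁿ such that u(r) > v(r) > 0 for all r > R₀ (as functions of r = |x|). Then w := u − v satisfies the differential inequality −Δw ≥ w^p pointwise on {x ∈ ℝⁿ : |x| > R₀}. -/

import Mathlib

open Set

noncomputable section

/-- The Laplacian of `u : ℝⁿ → ℝ`, as the sum of the pure second derivatives. -/
def laplacian {n : ℕ} (u : EuclideanSpace ℝ (Fin n) → ℝ) (x : EuclideanSpace ℝ (Fin n)) : ℝ :=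
  ∑ i : Fin n, iteratedFDeriv ℝ 2 u x ![EuclideanSpace.single i (1 : ℝ), EuclideanSpace.single i (1 : ℝ)]

/-- The nonlinearity `|a|^{2q+2} a + β |b|^{q+2} |a|^q a`. -/
def Fnl (q β a b : ℝ) : ℝ := |a| ^ (2 * q + 2) * a + β * |b| ^ (q + 2) * |a| ^ q * a

lemma real_add_rpow_le (x y p : ℝ) (hx : 0 ≤ x) (hy : 0 ≤ y) (hp : 1 ≤ p) :
    x ^ p + y ^ p ≤ (x + y) ^ p := by
  have h := NNReal.coe_le_coe.2 (NNReal.add_rpow_le_rpow_add x.toNNReal y.toNNReal hp)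
  simpa [NNReal.coe_rpow, Real.coe_toNNReal x hx, Real.coe_toNNReal y hy,
    ← Real.toNNReal_add hx hy, Real.coe_toNNReal _ (by linarith : (0:ℝ) ≤ x + y)] using h

lemma key_ineq (q β p : ℝ) (hq : -1 < q) (hpdef : p = 2 * q + 3) (hp : 1 < p) (hβ : β ≤ 0)
    (a b : ℝ) (hb : 0 < b) (hab : b < a) :
    (a - b) ^ p ≤ Fnl q β a b - Fnl q β b a := by
  have ha : 0 < a := hb.trans hab
  have habs : |a| = a := abs_of_pos ha
  have hbbs : |b| = b := abs_of_pos hb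
  have e1 : a ^ (2 * q + 2) * a = a ^ p := by
    rw [← Real.rpow_add_one ha.ne', hpdef]; ring_nf
  have e2 : b ^ (2 * q + 2) * b = b ^ p := by
    rw [← Real.rpow_add_one hb.ne', hpdef]; ring_nf
  have e3 : b ^ (q + 2) = b ^ (q + 1) * b := by
    rw [← Real.rpow_add_one hb.ne']; ring_nf
  have e4 : a ^ q * a = a ^ (q + 1) := (Real.rpow_add_one ha.ne' q).symm
  have e5 : a ^ (q + 2) = a ^ (q + 1) * a := by
    rw [← Real.rpow_add_one ha.ne']; ring_nf
  have e6 : b ^ q * b = b ^ (q + 1) := (Real.rpow_add_one hb.ne' q).symm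
  have hrw : Fnl q β a b - Fnl q β b a
      = (a ^ p - b ^ p) + (-β) * (a ^ (q + 1) * b ^ (q + 1)) * (a - b) := by
    unfold Fnl
    rw [habs, hbbs, mul_assoc (β * b ^ (q + 2)), e4, mul_assoc (β * a ^ (q + 2)), e6, e3, e5]
    rw [← e1, ← e2]; ring
  have hA : 0 < a ^ (q + 1) := Real.rpow_pos_of_pos ha _
  have hB : 0 < b ^ (q + 1) := Real.rpow_pos_of_pos hb _
  have hbeta : 0 ≤ (-β) * (a ^ (q + 1) * b ^ (q + 1)) * (a - b) := by
    have : 0 ≤ -β := by linarith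
    have : 0 ≤ (-β) * (a ^ (q + 1) * b ^ (q + 1)) := by positivity
    nlinarith
  have hmain : (a - b) ^ p + b ^ p ≤ a ^ p := by
    have h := real_add_rpow_le (a - b) b p (by linarith) hb.le hp.le
    rw [sub_add_cancel] at h
    exact h
  have hbp : 0 < b ^ p := Real.rpow_pos_of_pos hb _
  rw [hrw]; linarith

/-- If `β ≤ 0` and `(u,v)` is a classical radial solution of the system in `ℝⁿ` with
`u(r) > v(r) > 0` for `r > R₀`, then `w := u - v` satisfies `-Δw ≥ w^p` on `{|x| > R₀}`,
where `p = 2q+3 > 1`. -/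
theorem stmt18 (n : ℕ) (hn1 : 1 ≤ n) (q β p R₀ : ℝ) (hq : -1 < q) (hpdef : p = 2 * q + 3)
    (hp : 1 < p) (hβ : β ≤ 0) (hR₀ : 0 ≤ R₀)
    (u v : EuclideanSpace ℝ (Fin n) → ℝ) (u₀ v₀ : ℝ → ℝ)
    (hurad : ∀ x, u x = u₀ ‖x‖) (hvrad : ∀ x, v x = v₀ ‖x‖)
    (hu2 : ContDiff ℝ 2 u) (hv2 : ContDiff ℝ 2 v)
    (hequ : ∀ x, -laplacian u x = Fnl q β (u x) (v x))
    (heqv : ∀ x, -laplacian v x = Fnl q β (v x) (u x))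
    (hord : ∀ r : ℝ, R₀ < r → v₀ r < u₀ r ∧ 0 < v₀ r) :
    ∀ x : EuclideanSpace ℝ (Fin n), R₀ < ‖x‖ →
      (u x - v x) ^ p ≤ -laplacian (fun y => u y - v y) x := by
  intro x hx
  have hlap : laplacian (fun y => u y - v y) x = laplacian u x - laplacian v x := by
    unfold laplacian
    rw [← Finset.sum_sub_distrib]
    refine Finset.sum_congr rfl fun i _ => ?_
    have hfeq : (fun y => u y - v y) = (u + fun y => -v y) := by ext y; simp [sub_eq_add_neg]
    have hneg : iteratedFDeriv ℝ 2 (fun y => -v y) x = -iteratedFDeriv ℝ 2 v x :=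
      iteratedFDeriv_neg_apply
    rw [hfeq, iteratedFDeriv_add_apply hu2.contDiffAt hv2.neg.contDiffAt, hneg]
    simp [sub_eq_add_neg]
  have hord' := hord ‖x‖ hx
  have hv := hvrad x; have hu := hurad x
  have hvpos : 0 < v x := by rw [hv]; exact hord'.2
  have huv : v x < u x := by rw [hv, hu]; exact hord'.1
  have := key_ineq q β p hq hpdef hp hβ (u x) (v x) hvpos huv
  have heq : -laplacian (fun y => u y - v y) x = Fnl q β (u x) (v x) - Fnl q β (v x) (u x) := by
    rw [hlap]; have h1 := hequ x; have h2 := heqv x; linarith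
  linarith
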